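/- Assume P is uniformly elliptic and i.i.d. If there exists a probability measure Q on Ω which is invariant with respect to the point of view of the particle and which is not mutually singular with P, then there exists a probability measure Q̃ on Ω which is invariant with respect to the point of view of the particle and which is equivalent (mutually absolutely continuous) to P. -/

import Mathlib

open MeasureTheory Filter
open scoped ENNReal

noncomputable section

namespace RWRE

/-- sites of the lattice `ℤ^d`. -/
abbrev Site (d : ℕ) := Fin d → ℤ

/-- index set for the `2d` nearest-neighbour steps: `(i, true) ↦ e_i`, `(i, false) ↦ -e_i`. -/
abbrev StepIdx (d : ℕ) := Fin d × Bool

/-- the signed unit vector corresponding to a step index. -/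
def stepVec {d : ℕ} (s : StepIdx d) : Site d :=
  fun j => if j = s.1 then (if s.2 then 1 else -1) else 0

/-- probability vectors on the `2d` nearest-neighbour steps. -/
abbrev EnvAt (d : ℕ) := {p : StepIdx d → ℝ // (∀ s, 0 ≤ p s) ∧ ∑ s, p s = 1}

/-- the space of environments `Ω = (M_d)^{ℤ^d}`. -/
abbrev Env (d : ℕ) := Site d → EnvAt d

/-- the space of trajectories. -/
abbrev Path (d : ℕ) := ℕ → Site d

/-- the shift of the environment by `x`. -/
def shift {d : ℕ} (x : Site d) (ω : Env d) : Env d := fun y => ω (x + y)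

/-- transition probability in environment `ω` from site `y` by increment `v`. -/
def envP {d : ℕ} (ω : Env d) (y v : Site d) : ℝ≥0∞ :=
  ∑ s : StepIdx d, if v = stepVec s then ENNReal.ofReal ((ω y).1 s) else 0

/-- `μ` is the quenched law of the walk started at `x` in the environment `ω`: a
probability measure on path space whose cylinder probabilities are the products of
the transition probabilities of `ω`. -/
def IsQuenched {d : ℕ} (ω : Env d) (x : Site d) (μ : Measure (Path d)) : Prop :=
  IsProbabilityMeasure μ ∧
    ∀ (n : ℕ) (γ : ℕ → Site d),
      μ {f | ∀ i ≤ n, f i = γ i} =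
        (if γ 0 = x then 1 else 0) *
          ∏ i ∈ Finset.range n, envP ω (γ i) (γ (i + 1) - γ i)

/-- `Pq` is a measurable family of quenched laws. -/
def IsQuenchedFamily {d : ℕ} (Pq : Env d → Site d → Measure (Path d)) : Prop :=
  (∀ ω x, IsQuenched ω x (Pq ω x)) ∧
    ∀ (x : Site d) (A : Set (Path d)), MeasurableSet A →
      Measurable fun ω => Pq ω x A

/-- the annealed probability `ℙ^x(A) = ∫ P_ω^x(A) dP(ω)` of a path event. -/
def ann {d : ℕ} (P : Measure (Env d)) (Pq : Env d → Site d → Measure (Path d))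
    (x : Site d) (A : Set (Path d)) : ℝ≥0∞ :=
  ∫⁻ ω, Pq ω x A ∂P

/-- the annealed expectation `𝔼^x[g]` of a real path functional. -/
def annE {d : ℕ} (P : Measure (Env d)) (Pq : Env d → Site d → Measure (Path d))
    (x : Site d) (g : Path d → ℝ) : ℝ :=
  ∫ ω, (∫ f, g f ∂(Pq ω x)) ∂P

/-- `P` is an i.i.d. measure on the space of environments: its finite-dimensional
marginals are products of a fixed single-site probability measure. -/
def IsIID {d : ℕ} (P : Measure (Env d)) : Prop :=
  ∃ ν : Measure (EnvAt d), IsProbabilityMeasure ν ∧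
    ∀ (s : Finset (Site d)) (B : Site d → Set (EnvAt d)),
      (∀ x, MeasurableSet (B x)) →
        P {ω | ∀ x ∈ s, ω x ∈ B x} = ∏ x ∈ s, ν (B x)

/-- uniform ellipticity of `P`. -/
def UniformlyElliptic {d : ℕ} (P : Measure (Env d)) : Prop :=
  ∃ η : ℝ, 0 < η ∧ ∀ s : StepIdx d, P {ω : Env d | (ω 0).1 s < η} = 0

/-- a lattice point, viewed as a real vector. -/
def toR {d : ℕ} (x : Site d) : Fin d → ℝ := fun i => (x i : ℝ)

/-- inner product of a lattice point with a real direction. -/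
def dotR {d : ℕ} (x : Site d) (ℓ : Fin d → ℝ) : ℝ := ∑ i, (x i : ℝ) * ℓ i

/-- the euclidean norm of a real vector. -/
def norm2R {d : ℕ} (ℓ : Fin d → ℝ) : ℝ := Real.sqrt (∑ i, ℓ i ^ 2)

/-- the event `{T_L^{(-ℓ)} < T_L^{(ℓ)}}` that the walk reaches level `L` in
direction `-ℓ` strictly before reaching level `L` in direction `ℓ`. -/
def backtrackEvent {d : ℕ} (ℓ : Fin d → ℝ) (L : ℝ) : Set (Path d) :=
  {f | ∃ n, L ≤ dotR (f n) (-ℓ) ∧ ∀ m ≤ n, dotR (f m) ℓ < L}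

/-- condition `(T_γ)` in the direction `ℓ₀`. -/
def CondTAt {d : ℕ} (P : Measure (Env d)) (Pq : Env d → Site d → Measure (Path d))
    (γ : ℝ) (ℓ₀ : Fin d → ℝ) : Prop :=
  ∃ ε : ℝ, 0 < ε ∧ ∀ ℓ : Fin d → ℝ, norm2R ℓ = 1 → norm2R (ℓ - ℓ₀) < ε →
    ∃ C : ℝ, ∀ L : ℝ, 0 < L →
      ann P Pq 0 (backtrackEvent ℓ L) ≤ ENNReal.ofReal (C * Real.exp (-(L ^ γ)))

/-- condition `(T_γ)` in some direction. -/
def CondT {d : ℕ} (P : Measure (Env d)) (Pq : Env d → Site d → Measure (Path d))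
    (γ : ℝ) : Prop :=
  ∃ ℓ₀ : Fin d → ℝ, norm2R ℓ₀ = 1 ∧ CondTAt P Pq γ ℓ₀

/-- condition `(𝒫)`: condition `(T_γ)` holds for some `γ ∈ (0,1)` in some direction. -/
def CondP {d : ℕ} (P : Measure (Env d)) (Pq : Env d → Site d → Measure (Path d)) : Prop :=
  ∃ γ : ℝ, 0 < γ ∧ γ < 1 ∧ CondT P Pq γ

/-- condition `(𝒫)` in a given direction. -/
def CondPAt {d : ℕ} (P : Measure (Env d)) (Pq : Env d → Site d → Measure (Path d))
    (ℓ₀ : Fin d → ℝ) : Prop :=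
  ∃ γ : ℝ, 0 < γ ∧ γ < 1 ∧ CondTAt P Pq γ ℓ₀

/-- `Q` is invariant with respect to the point of view of the particle. -/
def InvariantPOV {d : ℕ} (Q : Measure (Env d)) : Prop :=
  ∀ g : Env d → ℝ, Measurable g → (∃ C : ℝ, ∀ ω, |g ω| ≤ C) →
    ∫ ω, (∑ s : StepIdx d, (ω 0).1 s * g (shift (stepVec s) ω)) ∂Q = ∫ ω, g ω ∂Q

/-- superpolynomial decay: `g N = N^{-ξ(1)}`. -/
def Superpoly (g : ℕ → ℝ) : Prop :=
  ∀ k : ℕ, Tendsto (fun N : ℕ => (N : ℝ) ^ k * g N) atTop (nhds 0)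

/-- the first coordinate `⟨x, e₁⟩` of a lattice point. -/
def firstCoord {d : ℕ} (x : Fin d → ℤ) : ℤ := if h : 0 < d then x ⟨0, h⟩ else 0

/-- the first coordinate `⟨ℓ, e₁⟩` of a real vector. -/
def firstCoordR {d : ℕ} (ℓ : Fin d → ℝ) : ℝ := if h : 0 < d then ℓ ⟨0, h⟩ else 0

/-- the first standard basis vector, as a real direction. -/
def e1R (d : ℕ) : Fin d → ℝ := fun i => if (i : ℕ) = 0 then 1 else 0

/-- `R_k(N) = ⌊exp((log log N)^{k+1})⌋`. -/
def Rk (k N : ℕ) : ℕ := ⌊Real.exp (Real.log (Real.log (N : ℝ)) ^ (k + 1))⌋₊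

/-- the `ℓ¹`-norm of a lattice point. -/
def norm1 {d : ℕ} (x : Site d) : ℤ := ∑ i, |x i|

/-- the parallelogram `𝒫(z,N)` (relative to the asymptotic direction `ϑ`). -/
def para {d : ℕ} (ϑ : Fin d → ℝ) (z : Site d) (N : ℕ) : Set (Site d) :=
  {x | |firstCoord (x - z)| < (N : ℤ) ^ 2 ∧
    ∀ i, |((x - z) i : ℝ) - (firstCoord (x - z) : ℝ) / firstCoordR ϑ * ϑ i|
      < (N : ℝ) * (Rk 5 N : ℝ)}

/-- the middle third `𝒫̃(z,N)` of the parallelogram. -/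
def paraMid {d : ℕ} (ϑ : Fin d → ℝ) (z : Site d) (N : ℕ) : Set (Site d) :=
  {x | 3 * |firstCoord (x - z)| < (N : ℤ) ^ 2 ∧
    ∀ i, 3 * |((x - z) i : ℝ) - (firstCoord (x - z) : ℝ) / firstCoordR ϑ * ϑ i|
      < (N : ℝ) * (Rk 5 N : ℝ)}

/-- the boundary `∂𝒫(z,N)`. -/
def paraBdry {d : ℕ} (ϑ : Fin d → ℝ) (z : Site d) (N : ℕ) : Set (Site d) :=
  {x | x ∉ para ϑ z N ∧ ∃ y ∈ para ϑ z N, norm1 (x - y) = 1}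

/-- the right boundary `∂⁺𝒫(z,N)`. -/
def paraBdryPlus {d : ℕ} (ϑ : Fin d → ℝ) (z : Site d) (N : ℕ) : Set (Site d) :=
  {x | x ∈ paraBdry ϑ z N ∧ firstCoord (x - z) = (N : ℤ) ^ 2}

/-- the walk hits the set `A`. -/
def hits {d : ℕ} (A : Set (Site d)) (f : Path d) : Prop := ∃ n, f n ∈ A

/-- the hitting time `T_A` of a set of sites. -/
def hitTime {d : ℕ} (A : Set (Site d)) (f : Path d) : ℕ := sInf {n | f n ∈ A}

/-- the hyperplane `H_M = {x : ⟨x,e₁⟩ = M}`. -/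
def hyper {d : ℕ} (M : ℤ) : Set (Site d) := {x | firstCoord x = M}

/-- the event that the walk hits `A`, at a time belonging to `I`, and in a point of `Δ`. -/
def exitEvent {d : ℕ} (A Δ : Set (Site d)) (I : Set ℕ) : Set (Path d) :=
  {f | hits A f ∧ f (hitTime A f) ∈ Δ ∧ hitTime A f ∈ I}

/-- the `d`-dimensional cube with corner `a` and side length `L`. -/
def cube {d : ℕ} (a : Site d) (L : ℕ) : Set (Site d) :=
  {x | ∀ i, a i ≤ x i ∧ x i < a i + (L : ℤ)}

/-- the same cube, as a finite set. -/
def cubeF {d : ℕ} (a : Site d) (L : ℕ) : Finset (Site d) :=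
  Fintype.piFinset fun i => Finset.Ico (a i) (a i + (L : ℤ))

/-- a `(d-1)`-dimensional cube of side length `L` inside the hyperplane `H_m`. -/
def cubeHyp {d : ℕ} (m : ℤ) (a : Site d) (L : ℕ) : Set (Site d) :=
  {x | firstCoord x = m ∧ ∀ i : Fin d, (i : ℕ) ≠ 0 → a i ≤ x i ∧ x i < a i + (L : ℤ)}

/-- the time interval `[t, t + L)`. -/
def interval (t L : ℕ) : Set ℕ := {n | t ≤ n ∧ n < t + L}

/-- `S` is the set of corners of a partition of `ℤ^d` into cubes of side length `L`. -/
def IsCubePartition {d : ℕ} (L : ℕ) (S : Set (Site d)) : Prop :=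
  (∀ x : Site d, ∃ a ∈ S, x ∈ cube a L) ∧
    ∀ a ∈ S, ∀ b ∈ S, a ≠ b → Disjoint (cube a L) (cube b L)

/-- `t` is a regeneration time of the path `f` in direction `e₁`. -/
def IsRegen {d : ℕ} (f : Path d) (t : ℕ) : Prop :=
  (∀ s < t, firstCoord (f s) < firstCoord (f t)) ∧
    firstCoord (f t) < firstCoord (f (t + 1)) ∧
    ∀ s, t + 1 < s → firstCoord (f (t + 1)) < firstCoord (f s)

/-- the `k`-th regeneration time `τ_k` (with the convention `τ₀ = 0`). -/
def regTime {d : ℕ} (f : Path d) : ℕ → ℕ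
  | 0 => 0
  | k + 1 => sInf {t | regTime f k < t ∧ IsRegen f t}

/-- the event `B_N` that each of the first `N²` regeneration gaps is at most `R(N)`. -/
def BN {d : ℕ} (N : ℕ) : Set (Path d) :=
  {f | ∀ k, 1 ≤ k → k ≤ N ^ 2 → regTime f k - regTime f (k - 1) ≤ Rk 1 N}

/-- `ϑ` is the asymptotic direction `lim Xₙ/‖Xₙ‖₂` of the walk, annealed a.s. -/
def DirSpeed {d : ℕ} (P : Measure (Env d)) (Pq : Env d → Site d → Measure (Path d))
    (ϑ : Fin d → ℝ) : Prop :=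
  ann P Pq 0 {f | ¬ Tendsto (fun n => fun i => toR (f n) i / norm2R (toR (f n)))
    atTop (nhds ϑ)} = 0

/-- the σ-algebra generated by the environment in the half space `⟨z,e₁⟩ ≤ m`. -/
def sigmaUpTo (d : ℕ) (m : ℤ) : MeasurableSpace (Env d) :=
  MeasurableSpace.comap
    (fun ω => (fun z : {z : Site d // firstCoord z ≤ m} => ω z.1)) inferInstance

-- chunk 1: cylinders and generation
variable {d : ℕ}

/-- a cylinder set with base `F`. -/
def cyl (F : Finset (Site d)) (B : Site d → Set (EnvAt d)) : Set (Env d) :=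
  {ω | ∀ x ∈ F, ω x ∈ B x}

/-- the cylinder sets with base `F`. -/
def cylSet (F : Finset (Site d)) : Set (Set (Env d)) :=
  {C | ∃ B : Site d → Set (EnvAt d), (∀ x, MeasurableSet (B x)) ∧ C = cyl F B}

/-- all cylinder sets. -/
def cylSets (d : ℕ) : Set (Set (Env d)) := ⋃ F : Finset (Site d), cylSet F

lemma cyl_inter (F F' : Finset (Site d)) (B B' : Site d → Set (EnvAt d)) :
    cyl F B ∩ cyl F' B' =
      cyl (F ∪ F') (fun x => (if x ∈ F then B x else Set.univ) ∩
        (if x ∈ F' then B' x else Set.univ)) := by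
  ext ω
  simp only [cyl, Set.mem_inter_iff, Set.mem_setOf_eq, Finset.mem_union]
  constructor
  · rintro ⟨h1, h2⟩ x hx
    constructor
    · by_cases h : x ∈ F <;> simp [h, h1 x]
    · by_cases h : x ∈ F' <;> simp [h, h2 x]
  · intro h
    constructor
    · intro x hx; have := (h x (Or.inl hx)).1; simpa [hx] using this
    · intro x hx; have := (h x (Or.inr hx)).2; simpa [hx] using this

lemma cyl_mono {F F' : Finset (Site d)} (h : F ⊆ F') (B : Site d → Set (EnvAt d)) :
    cyl F B = cyl F' (fun x => if x ∈ F then B x else Set.univ) := by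
  ext ω
  simp only [cyl, Set.mem_setOf_eq]
  constructor
  · intro hω x hx; by_cases hxF : x ∈ F <;> simp [hxF, hω x]
  · intro hω x hx; have := hω x (h hx); simpa [hx] using this

lemma cylSet_mono {F F' : Finset (Site d)} (h : F ⊆ F') : cylSet F ⊆ cylSet F' := by
  rintro C ⟨B, hB, rfl⟩
  exact ⟨_, fun x => by by_cases hx : x ∈ F <;> simp [hx, hB x],
    cyl_mono h B⟩

lemma isPiSystem_cylSet (F : Finset (Site d)) : IsPiSystem (cylSet F) := by
  rintro C ⟨B, hB, rfl⟩ C' ⟨B', hB', rfl⟩ -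
  refine ⟨fun x => B x ∩ B' x, fun x => (hB x).inter (hB' x), ?_⟩
  ext ω; simp only [cyl, Set.mem_inter_iff, Set.mem_setOf_eq]
  exact ⟨fun ⟨h1, h2⟩ x hx => ⟨h1 x hx, h2 x hx⟩,
    fun h => ⟨fun x hx => (h x hx).1, fun x hx => (h x hx).2⟩⟩

lemma isPiSystem_cylSets : IsPiSystem (cylSets d) := by
  rintro C hC C' hC' -
  simp only [cylSets, Set.mem_iUnion] at *
  obtain ⟨F, B, hB, rfl⟩ := hC
  obtain ⟨F', B', hB', rfl⟩ := hC'
  refine ⟨F ∪ F', ?_⟩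
  rw [cyl_inter]
  refine ⟨_, fun x => ?_, rfl⟩
  exact MeasurableSet.inter (by by_cases hx : x ∈ F <;> simp [hx, hB x])
    (by by_cases hx : x ∈ F' <;> simp [hx, hB' x])

lemma measurableSet_cyl {F : Finset (Site d)} {B : Site d → Set (EnvAt d)}
    (hB : ∀ x, MeasurableSet (B x)) : MeasurableSet (cyl F B) := by
  have : cyl F B = ⋂ x ∈ F, (fun ω : Env d => ω x) ⁻¹' B x := by
    ext ω; simp [cyl]
  rw [this]
  exact MeasurableSet.biInter F.countable_toSet
    (fun x _ => measurable_pi_apply x (hB x))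

lemma generateFrom_cylSets :
    (MeasurableSpace.pi : MeasurableSpace (Env d)) = MeasurableSpace.generateFrom (cylSets d) := by
  refine le_antisymm ?_ ?_
  · refine iSup_le fun a => ?_
    rw [← measurable_iff_comap_le]
    intro B hB
    apply MeasurableSpace.measurableSet_generateFrom
    refine Set.mem_iUnion.2 ⟨{a}, fun _ => B, fun _ => hB, ?_⟩
    ext ω; simp [cyl]
  · refine MeasurableSpace.generateFrom_le ?_
    rintro C hC
    obtain ⟨F, B, hB, rfl⟩ := Set.mem_iUnion.1 hC
    exact measurableSet_cyl hB
-- chunk 2: shift properties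
lemma measurable_shift (x : Site d) : Measurable (shift (d := d) x) :=
  measurable_pi_lambda _ fun y => measurable_pi_apply (x + y)

lemma shift_shift (x y : Site d) (ω : Env d) :
    shift x (shift y ω) = shift (y + x) ω := by
  funext z; simp [shift, add_assoc]

lemma shift_zero (ω : Env d) : shift 0 ω = ω := by funext z; simp [shift]

lemma shift_preimage_cyl (z : Site d) (F : Finset (Site d)) (B : Site d → Set (EnvAt d)) :
    shift z ⁻¹' cyl F B = cyl (F.image (fun x => z + x)) (fun y => B (y - z)) := by
  ext ω
  simp only [cyl, Set.mem_preimage, Set.mem_setOf_eq, Finset.mem_image]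
  constructor
  · rintro h y ⟨x, hx, rfl⟩
    simpa [shift] using h x hx
  · intro h x hx
    have := h (z + x) ⟨x, hx, rfl⟩
    simpa [shift] using this

/-- the shift is measure preserving for an iid measure. -/
lemma shift_measurePreserving {P : Measure (Env d)} [IsProbabilityMeasure P]
    (hIID : IsIID P) (z : Site d) : P.map (shift z) = P := by
  obtain ⟨ν, hν, hcyl0⟩ := hIID
  have hcyl : ∀ (F : Finset (Site d)) (B : Site d → Set (EnvAt d)),
      (∀ x, MeasurableSet (B x)) → P (cyl F B) = ∏ x ∈ F, ν (B x) :=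
    fun F B hB => hcyl0 F B hB
  have hmap : IsProbabilityMeasure (P.map (shift z)) :=
    Measure.isProbabilityMeasure_map (measurable_shift z).aemeasurable
  refine MeasureTheory.ext_of_generate_finite (cylSets d) generateFrom_cylSets
    isPiSystem_cylSets ?_ (by simp [hmap.measure_univ])
  rintro C hC
  obtain ⟨F, B, hB, rfl⟩ := Set.mem_iUnion.1 hC
  rw [Measure.map_apply (measurable_shift z) (measurableSet_cyl hB),
    shift_preimage_cyl, hcyl _ _ (fun y => hB (y - z)), hcyl F B hB,
    Finset.prod_image (by intro a _ b _ h; exact add_left_cancel h)]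
  simp

/-- independence of disjointly based cylinder σ-algebras. -/
lemma indep_of_disjoint {P : Measure (Env d)} [IsProbabilityMeasure P]
    (hIID : IsIID P) {F G : Finset (Site d)} (hFG : Disjoint F G)
    {B1 B2 : Set (Env d)}
    (h1 : MeasurableSet[MeasurableSpace.generateFrom (cylSet F)] B1)
    (h2 : MeasurableSet[MeasurableSpace.generateFrom (cylSet G)] B2) :
    P (B1 ∩ B2) = P B1 * P B2 := by
  obtain ⟨ν, hν, hcyl0⟩ := hIID
  have hcyl : ∀ (F : Finset (Site d)) (B : Site d → Set (EnvAt d)),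
      (∀ x, MeasurableSet (B x)) → P (cyl F B) = ∏ x ∈ F, ν (B x) :=
    fun F B hB => hcyl0 F B hB
  have hle : ∀ H : Finset (Site d),
      MeasurableSpace.generateFrom (cylSet H) ≤ (inferInstance : MeasurableSpace (Env d)) := by
    intro H
    refine MeasurableSpace.generateFrom_le ?_
    rintro C ⟨B, hB, rfl⟩
    exact measurableSet_cyl hB
  have hindep : ProbabilityTheory.Indep
      (MeasurableSpace.generateFrom (cylSet F))
      (MeasurableSpace.generateFrom (cylSet G)) P := by
    refine ProbabilityTheory.IndepSets.indep (hle F) (hle G)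
      (isPiSystem_cylSet F) (isPiSystem_cylSet G) rfl rfl ?_
    rw [ProbabilityTheory.IndepSets_iff]
    rintro C1 C2 ⟨B, hB, rfl⟩ ⟨B', hB', rfl⟩
    have hcomb : cyl F B ∩ cyl G B' =
        cyl (F ∪ G) (fun x => if x ∈ F then B x else B' x) := by
      ext ω
      simp only [cyl, Set.mem_inter_iff, Set.mem_setOf_eq, Finset.mem_union]
      constructor
      · rintro ⟨hf, hg⟩ x hx
        rcases hx with hx | hx
        · simp [hx, hf x hx]
        · have hxF : x ∉ F := fun hxF => (Finset.disjoint_left.1 hFG) hxF hx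
          simp [hxF, hg x hx]
      · intro h
        refine ⟨fun x hx => by simpa [hx] using h x (Or.inl hx), fun x hx => ?_⟩
        have hxF : x ∉ F := fun hxF => (Finset.disjoint_left.1 hFG) hxF hx
        simpa [hxF] using h x (Or.inr hx)
    rw [hcomb, hcyl _ _ (fun x => by by_cases hx : x ∈ F <;> simp [hx, hB x, hB' x]),
      Finset.prod_union hFG, hcyl _ _ hB, hcyl _ _ hB']
    congr 1
    · exact Finset.prod_congr rfl fun x hx => by simp [hx]
    · refine Finset.prod_congr rfl fun x hx => ?_
      have hxF : x ∉ F := fun hxF => (Finset.disjoint_left.1 hFG) hxF hx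
      simp [hxF]
  exact (ProbabilityTheory.Indep_iff _ _ _).1 hindep B1 B2 h1 h2
open scoped symmDiff
-- chunk 3: approximation by cylinder-algebra sets
lemma cylAlg_le (F : Finset (Site d)) :
    MeasurableSpace.generateFrom (cylSet F) ≤ (inferInstance : MeasurableSpace (Env d)) :=
  MeasurableSpace.generateFrom_le (by rintro C ⟨B, hB, rfl⟩; exact measurableSet_cyl hB)

lemma generateFrom_cylSet_mono {F F' : Finset (Site d)} (h : F ⊆ F') :
    MeasurableSpace.generateFrom (cylSet F) ≤ MeasurableSpace.generateFrom (cylSet F') :=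
  MeasurableSpace.generateFrom_mono (cylSet_mono h)

lemma approx_mem_S (μ : Measure (Env d)) [IsFiniteMeasure μ] {A : Set (Env d)}
    (hA : MeasurableSet A) :
    A ∈ {A : Set (Env d) | MeasurableSet A ∧ ∀ ε : ℝ≥0∞, 0 < ε → ε < ⊤ →
      ∃ (F : Finset (Site d)) (B : Set (Env d)),
        MeasurableSet[MeasurableSpace.generateFrom (cylSet F)] B ∧ μ (A ∆ B) ≤ ε} := by
  classical
  set S : Set (Set (Env d)) := {A : Set (Env d) | MeasurableSet A ∧ ∀ ε : ℝ≥0∞, 0 < ε → ε < ⊤ →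
      ∃ (F : Finset (Site d)) (B : Set (Env d)),
        MeasurableSet[MeasurableSpace.generateFrom (cylSet F)] B ∧ μ (A ∆ B) ≤ ε} with hS
  -- S is a measurable space structure
  let m' : MeasurableSpace (Env d) :=
    { MeasurableSet' := fun A => A ∈ S
      measurableSet_empty := ⟨MeasurableSet.empty, fun ε hε _ =>
        ⟨∅, ∅, (MeasurableSpace.generateFrom (cylSet (∅ : Finset (Site d)))).measurableSet_empty, by simp⟩⟩
      measurableSet_compl := by
        rintro A ⟨hAm, hAa⟩
        refine ⟨hAm.compl, fun ε hε hεt => ?_⟩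
        obtain ⟨F, B, hBm, hBa⟩ := hAa ε hε hεt
        exact ⟨F, Bᶜ, hBm.compl, by rwa [compl_symmDiff_compl]⟩
      measurableSet_iUnion := by
        intro f hf
        refine ⟨MeasurableSet.iUnion fun n => (hf n).1, fun ε hε hεt => ?_⟩
        set A := ⋃ n, f n with hAdef
        set g : ℕ → Set (Env d) := fun N => ⋃ n ∈ Finset.range N, f n with hgdef
        have hgm : ∀ N, MeasurableSet (g N) := fun N =>
          MeasurableSet.biUnion (Finset.range N).countable_toSet fun n _ => (hf n).1
        have hgsub : ∀ N, g N ⊆ A := fun N =>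
          Set.iUnion₂_subset fun n _ => Set.subset_iUnion f n
        have hq : 0 < ε / 2 := ENNReal.div_pos hε.ne' (by norm_num)
        have hqt : ε / 2 < ⊤ := lt_of_le_of_lt (ENNReal.half_le_self) hεt
        -- pick N with μ (A \ g N) ≤ ε/2
        obtain ⟨N, hN⟩ : ∃ N, μ (A \ g N) ≤ ε / 2 := by
          rcases le_or_gt (μ A) (ε / 2) with hle | hlt
          · exact ⟨0, le_trans (measure_mono Set.diff_subset) hle⟩
          · have hmono : Monotone g := by
              intro a b hab
              exact Set.iUnion₂_subset fun n hn => Set.subset_iUnion₂ (s := fun n _ => f n) n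
                (Finset.mem_range.2 (lt_of_lt_of_le (Finset.mem_range.1 hn) hab))
            have hiU : (⋃ N, g N) = A := by
              refine le_antisymm (Set.iUnion_subset hgsub) fun x hx => ?_
              obtain ⟨n, hn⟩ := Set.mem_iUnion.1 hx
              exact Set.mem_iUnion.2 ⟨n + 1,
                Set.mem_iUnion₂.2 ⟨n, Finset.mem_range.2 n.lt_succ_self, hn⟩⟩
            have htend : Filter.Tendsto (fun N => μ (g N)) Filter.atTop (nhds (μ A)) := by
              have := MeasureTheory.tendsto_measure_iUnion_atTop (μ := μ) hmono
              rwa [hiU] at this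
            have hblt : μ A - ε / 2 < μ A :=
              ENNReal.sub_lt_self (measure_lt_top μ _).ne
                (lt_of_le_of_lt zero_le hlt).ne' hq.ne'
            obtain ⟨N, hN⟩ := ((tendsto_order.1 htend).1 _ hblt).exists
            refine ⟨N, ?_⟩
            rw [measure_diff (hgsub N) (hgm N).nullMeasurableSet (measure_lt_top μ _).ne]
            rw [tsub_le_iff_right]
            have := (ENNReal.sub_lt_iff_lt_right hqt.ne hlt.le).1 hN
            rw [add_comm] at this
            exact this.le
        -- approximate the finitely many pieces
        have hpos : (0:ℝ≥0∞) < ε / (2 * (N + 1)) :=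
          ENNReal.div_pos hε.ne' (ENNReal.mul_ne_top (by norm_num) (by simp))
        have hplt : ε / (2 * (N + 1)) < ⊤ :=
          ENNReal.div_lt_top hεt.ne (by simp)
        have hpiece : ∀ n : ℕ, ∃ (F : Finset (Site d)) (B : Set (Env d)),
            MeasurableSet[MeasurableSpace.generateFrom (cylSet F)] B ∧
              μ (f n ∆ B) ≤ ε / (2 * (N + 1)) :=
          fun n => (hf n).2 _ hpos hplt
        choose Fn Bn hBnm hBna using hpiece
        refine ⟨(Finset.range N).biUnion Fn, ⋃ n ∈ Finset.range N, Bn n, ?_, ?_⟩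
        · refine MeasurableSet.biUnion (Finset.range N).countable_toSet fun n hn => ?_
          exact generateFrom_cylSet_mono (Finset.subset_biUnion_of_mem Fn hn) _ (hBnm n)
        · set Bu := ⋃ n ∈ Finset.range N, Bn n with hBu
          have htri : A ∆ Bu ⊆ (A ∆ g N) ∪ (g N ∆ Bu) := symmDiff_triangle _ _ _
          have hsub2 : g N ∆ Bu ⊆ ⋃ n ∈ Finset.range N, (f n ∆ Bn n) := by
            intro x hx
            rcases hx with hx | hx
            · obtain ⟨hx1, hx2⟩ := hx
              obtain ⟨n, hn, hxf⟩ := Set.mem_iUnion₂.1 hx1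
              have hxB : x ∉ Bn n := fun hc => hx2 (Set.mem_iUnion₂.2 ⟨n, hn, hc⟩)
              exact Set.mem_iUnion₂.2 ⟨n, hn, Or.inl ⟨hxf, hxB⟩⟩
            · obtain ⟨hx1, hx2⟩ := hx
              obtain ⟨n, hn, hxB⟩ := Set.mem_iUnion₂.1 hx1
              have hxf : x ∉ f n := fun hc => hx2 (Set.mem_iUnion₂.2 ⟨n, hn, hc⟩)
              exact Set.mem_iUnion₂.2 ⟨n, hn, Or.inr ⟨hxB, hxf⟩⟩
          have h1 : μ (A ∆ g N) ≤ ε / 2 := by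
            have : A ∆ g N = A \ g N := by
              rw [Set.symmDiff_def, Set.diff_eq_empty.2 (hgsub N), Set.union_empty]
            rwa [this]
          have h2 : μ (g N ∆ Bu) ≤ ε / 2 := by
            refine le_trans (measure_mono hsub2) ?_
            refine le_trans (measure_biUnion_finset_le _ _) ?_
            calc ∑ n ∈ Finset.range N, μ (f n ∆ Bn n)
                ≤ ∑ _n ∈ Finset.range N, ε / (2 * (N + 1)) :=
                  Finset.sum_le_sum fun n _ => hBna n
              _ = N * (ε / (2 * (N + 1))) := by
                  rw [Finset.sum_const, Finset.card_range, nsmul_eq_mul]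
              _ ≤ (N + 1) * (ε / (2 * (N + 1))) := by
                  gcongr; exact le_self_add
              _ ≤ ε / 2 := by
                  rw [ENNReal.le_div_iff_mul_le (Or.inl (by norm_num)) (Or.inl (by norm_num)),
                    mul_comm, ← mul_assoc, ENNReal.div_eq_inv_mul, ← mul_assoc]
                  rw [show (2:ℝ≥0∞) * ((N:ℝ≥0∞) + 1) * (2 * ((N:ℝ≥0∞)+1))⁻¹ = 1 from
                    ENNReal.mul_inv_cancel (mul_ne_zero (by norm_num) (by simp)) (ENNReal.mul_ne_top (by norm_num)
                      (by simp))]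
                  simp
          calc μ (A ∆ Bu) ≤ μ (A ∆ g N) + μ (g N ∆ Bu) :=
              le_trans (measure_mono htri) (measure_union_le _ _)
            _ ≤ ε / 2 + ε / 2 := add_le_add h1 h2
            _ = ε := ENNReal.add_halves ε }
  -- every measurable set lies in S
  have hle : (MeasurableSpace.pi : MeasurableSpace (Env d)) ≤ m' := by
    rw [generateFrom_cylSets]
    refine MeasurableSpace.generateFrom_le ?_
    rintro C hC
    obtain ⟨F, B, hB, rfl⟩ := Set.mem_iUnion.1 hC
    refine ⟨measurableSet_cyl hB, fun ε hε _ => ?_⟩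
    exact ⟨F, cyl F B, MeasurableSpace.measurableSet_generateFrom ⟨B, hB, rfl⟩, by simp⟩
  exact hle A hA

lemma approx_by_cyl (μ : Measure (Env d)) [IsFiniteMeasure μ] {A : Set (Env d)}
    (hA : MeasurableSet A) {ε : ℝ≥0∞} (hε : 0 < ε) (hεt : ε < ⊤) :
    ∃ (F : Finset (Site d)) (B : Set (Env d)),
      MeasurableSet[MeasurableSpace.generateFrom (cylSet F)] B ∧ μ (A ∆ B) ≤ ε :=
  (approx_mem_S μ hA).2 ε hε hεt
open scoped NNReal
-- chunk 4: the transition operator of the environment viewed from the particle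
/-- the transition weight `ω(0,s)` as `ℝ≥0`. -/
def wgt {d : ℕ} (s : StepIdx d) (ω : Env d) : ℝ≥0 := ((ω 0).1 s).toNNReal

lemma measurable_wgt (s : StepIdx d) : Measurable (wgt (d := d) s) := by
  have h1 : Measurable fun ω : Env d => (ω 0).1 s :=
    ((measurable_pi_apply s).comp (measurable_subtype_coe.comp (measurable_pi_apply 0)))
  exact h1.real_toNNReal

lemma wgt_coe (s : StepIdx d) (ω : Env d) : ((wgt s ω : ℝ≥0) : ℝ) = (ω 0).1 s :=
  Real.coe_toNNReal _ ((ω 0).2.1 s)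

lemma sum_wgt (ω : Env d) : ∑ s : StepIdx d, ((wgt s ω : ℝ≥0) : ℝ≥0∞) = 1 := by
  rw [← ENNReal.coe_finset_sum]
  norm_cast
  have : ∑ s : StepIdx d, ((wgt s ω : ℝ≥0) : ℝ) = 1 := by
    rw [Finset.sum_congr rfl fun s _ => wgt_coe s ω]
    exact (ω 0).2.2
  exact_mod_cast this

/-- the operator `K` on environment measures. -/
def transK {d : ℕ} (μ : Measure (Env d)) : Measure (Env d) :=
  ∑ s : StepIdx d, Measure.map (shift (stepVec s))
    (μ.withDensity fun ω => ((wgt s ω : ℝ≥0) : ℝ≥0∞))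

lemma transK_apply (μ : Measure (Env d)) {A : Set (Env d)} (hA : MeasurableSet A) :
    transK μ A = ∑ s : StepIdx d, ∫⁻ ω in shift (stepVec s) ⁻¹' A,
      ((wgt s ω : ℝ≥0) : ℝ≥0∞) ∂μ := by
  rw [transK, Measure.finset_sum_apply]
  refine Finset.sum_congr rfl fun s _ => ?_
  rw [Measure.map_apply (measurable_shift _) hA,
    withDensity_apply _ ((measurable_shift _) hA)]

lemma transK_univ (μ : Measure (Env d)) : transK μ Set.univ = μ Set.univ := by
  rw [transK_apply μ MeasurableSet.univ]
  simp only [Set.preimage_univ, Measure.restrict_univ]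
  rw [← MeasureTheory.lintegral_finset_sum _ fun s _ => (measurable_wgt s).coe_nnreal_ennreal]
  simp only [sum_wgt]
  simp

lemma transK_add (μ ν : Measure (Env d)) : transK (μ + ν) = transK μ + transK ν := by
  simp only [transK, withDensity_add_measure, Measure.map_add _ _ (measurable_shift _)]
  exact Finset.sum_add_distrib

lemma transK_smul (c : ℝ≥0∞) (μ : Measure (Env d)) : transK (c • μ) = c • transK μ := by
  simp only [transK, withDensity_smul_measure, Measure.map_smul, Finset.smul_sum]

lemma transK_absolutelyContinuous {μ P : Measure (Env d)} [IsProbabilityMeasure P]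
    (hIID : IsIID P) (h : μ ≪ P) : transK μ ≪ P := by
  refine Measure.AbsolutelyContinuous.mk fun A hA hPA => ?_
  rw [transK_apply μ hA]
  refine Finset.sum_eq_zero fun s _ => ?_
  have hpre : μ (shift (stepVec s) ⁻¹' A) = 0 := by
    have hPpre : P (shift (stepVec s) ⁻¹' A) = 0 := by
      have h2 : P (shift (stepVec s) ⁻¹' A) = (P.map (shift (stepVec s))) A :=
        (Measure.map_apply (measurable_shift _) hA).symm
      rw [shift_measurePreserving hIID] at h2
      rw [h2]; exact hPA
    exact h hPpre
  rw [Measure.restrict_eq_zero.2 hpre]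
  simp

instance transK_isFiniteMeasure (μ : Measure (Env d)) [IsFiniteMeasure μ] :
    IsFiniteMeasure (transK μ) :=
  ⟨by rw [transK_univ]; exact measure_lt_top μ _⟩
-- chunk 5: the operator and the invariance property
lemma integrable_of_bounded {μ : Measure (Env d)} [IsFiniteMeasure μ]
    {g : Env d → ℝ} (hg : Measurable g) {C : ℝ} (hC : ∀ ω, |g ω| ≤ C) :
    Integrable g μ := by
  refine ⟨hg.aestronglyMeasurable, ?_⟩
  exact MeasureTheory.HasFiniteIntegral.of_bounded (C := C)
    (Filter.Eventually.of_forall fun ω => by simpa [Real.norm_eq_abs] using hC ω)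

lemma integral_transK (μ : Measure (Env d)) [IsFiniteMeasure μ]
    {g : Env d → ℝ} (hg : Measurable g) {C : ℝ} (hC : ∀ ω, |g ω| ≤ C) :
    ∫ ω, g ω ∂(transK μ) =
      ∫ ω, (∑ s : StepIdx d, (ω 0).1 s * g (shift (stepVec s) ω)) ∂μ := by
  have hwd : ∀ s : StepIdx d, IsFiniteMeasure
      (μ.withDensity fun ω => ((wgt s ω : ℝ≥0) : ℝ≥0∞)) := by
    intro s
    refine ⟨?_⟩
    rw [withDensity_apply _ MeasurableSet.univ, Measure.restrict_univ]
    calc ∫⁻ ω, ((wgt s ω : ℝ≥0) : ℝ≥0∞) ∂μ ≤ ∫⁻ _, 1 ∂μ := by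
          refine lintegral_mono fun ω => ?_
          have h1 : ((wgt s ω : ℝ≥0) : ℝ≥0∞) ≤ ∑ t : StepIdx d, ((wgt t ω : ℝ≥0) : ℝ≥0∞) :=
            Finset.single_le_sum (f := fun t => ((wgt t ω : ℝ≥0) : ℝ≥0∞))
              (fun t _ => zero_le) (Finset.mem_univ s)
          rw [sum_wgt] at h1; exact h1
      _ < ⊤ := by simpa using measure_lt_top μ Set.univ
  have hfm : ∀ s : StepIdx d, IsFiniteMeasure
      (Measure.map (shift (stepVec s)) (μ.withDensity fun ω => ((wgt s ω : ℝ≥0) : ℝ≥0∞))) := by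
    intro s
    haveI := hwd s
    exact Measure.isFiniteMeasure_map _ _
  rw [transK, MeasureTheory.integral_finset_sum_measure (by
    intro s _
    haveI := hfm s
    exact integrable_of_bounded hg hC)]
  have hterm : ∀ s : StepIdx d,
      ∫ ω, g ω ∂(Measure.map (shift (stepVec s))
          (μ.withDensity fun ω => ((wgt s ω : ℝ≥0) : ℝ≥0∞))) =
        ∫ ω, (ω 0).1 s * g (shift (stepVec s) ω) ∂μ := by
    intro s
    rw [MeasureTheory.integral_map (measurable_shift _).aemeasurable
      hg.aestronglyMeasurable]
    rw [integral_withDensity_eq_integral_smul (measurable_wgt s)]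
    refine integral_congr_ae (Filter.Eventually.of_forall fun ω => ?_)
    simp [NNReal.smul_def, wgt_coe]
  rw [Finset.sum_congr rfl fun s _ => hterm s]
  rw [← MeasureTheory.integral_finset_sum]
  intro s _
  refine integrable_of_bounded ?_ (C := C) ?_
  · have m1 : Measurable fun ω : Env d => (ω 0).1 s := ((measurable_pi_apply s).comp
      (measurable_subtype_coe.comp (measurable_pi_apply 0)))
    have m2 : Measurable fun ω => g (shift (stepVec s) ω) := hg.comp (measurable_shift _)
    exact m1.mul m2
  · intro ω
    have h0 : 0 ≤ (ω 0).1 s := (ω 0).2.1 s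
    have h1 : (ω 0).1 s ≤ 1 := by
      have := (ω 0).2.2
      have hsum : (ω 0).1 s ≤ ∑ t : StepIdx d, (ω 0).1 t :=
        Finset.single_le_sum (fun t _ => (ω 0).2.1 t) (Finset.mem_univ s)
      rwa [this] at hsum
    rw [abs_mul, abs_of_nonneg h0]
    calc (ω 0).1 s * |g (shift (stepVec s) ω)| ≤ 1 * C :=
          mul_le_mul h1 (hC _) (abs_nonneg _) zero_le_one
      _ = C := one_mul C

/-- a measure invariant under `transK` is invariant for the point of view of the particle. -/
lemma invariantPOV_of_transK {Q : Measure (Env d)} [IsFiniteMeasure Q]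
    (h : transK Q = Q) : InvariantPOV Q := by
  intro g hg ⟨C, hC⟩
  rw [← integral_transK Q hg hC, h]

/-- conversely. -/
lemma transK_eq_of_invariantPOV {Q : Measure (Env d)} [IsProbabilityMeasure Q]
    (h : InvariantPOV Q) : transK Q = Q := by
  refine Measure.ext fun A hA => ?_
  have hg : Measurable (A.indicator (fun _ => (1:ℝ))) := measurable_const.indicator hA
  have hC : ∀ ω, |A.indicator (fun _ => (1:ℝ)) ω| ≤ 1 := by
    intro ω
    by_cases hω : ω ∈ A <;> simp [Set.indicator_apply, hω]
  have h1 := h _ hg ⟨1, hC⟩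
  rw [← integral_transK Q hg hC] at h1
  have h2 : ∫ ω, A.indicator (fun _ => (1:ℝ)) ω ∂(transK Q) = (transK Q A).toReal := by
    exact (MeasureTheory.integral_indicator_one (μ := transK Q) hA).trans (measureReal_def _ _)
  have h3 : ∫ ω, A.indicator (fun _ => (1:ℝ)) ω ∂Q = (Q A).toReal := by
    exact (MeasureTheory.integral_indicator_one (μ := Q) hA).trans (measureReal_def _ _)
  rw [h2, h3] at h1
  exact (ENNReal.toReal_eq_toReal_iff' (measure_ne_top _ _) (measure_ne_top _ _)).1 h1
-- chunk 6: the absolutely continuous part is invariant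
lemma eq_of_le_of_univ_eq {μ ν : Measure (Env d)} [IsFiniteMeasure ν]
    (hle : ∀ A, MeasurableSet A → μ A ≤ ν A) (huniv : μ Set.univ = ν Set.univ) : μ = ν := by
  refine Measure.ext fun A hA => ?_
  have h1 : μ A + μ Aᶜ ≤ ν A + ν Aᶜ := add_le_add (hle A hA) (hle Aᶜ hA.compl)
  have h2 : μ A + μ Aᶜ = ν A + ν Aᶜ := by
    rw [measure_add_measure_compl hA, measure_add_measure_compl hA, huniv]
  by_contra hne
  have hlt : μ A < ν A := lt_of_le_of_ne (hle A hA) hne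
  have : μ A + μ Aᶜ < ν A + ν Aᶜ :=
    ENNReal.add_lt_add_of_lt_of_le (lt_of_le_of_lt (hle Aᶜ hA.compl) (measure_lt_top ν Aᶜ)).ne hlt (hle Aᶜ hA.compl)
  exact absurd h2 this.ne

lemma transK_rnDeriv_invariant {P Q : Measure (Env d)} [IsProbabilityMeasure P]
    [IsProbabilityMeasure Q] (hIID : IsIID P) (hK : transK Q = Q) :
    transK (P.withDensity (Q.rnDeriv P)) = P.withDensity (Q.rnDeriv P) := by
  set Qa := P.withDensity (Q.rnDeriv P) with hQa
  set Qs := Q.singularPart P with hQs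
  have hdecomp : Qs + Qa = Q := Measure.singularPart_add_rnDeriv Q P
  have hQaP : Qa ≪ P := withDensity_absolutelyContinuous _ _
  have hKQaP : transK Qa ≪ P := transK_absolutelyContinuous hIID hQaP
  obtain ⟨S, hSm, hQsS, hPSc⟩ := Measure.mutuallySingular_singularPart Q P
  set T := Sᶜ with hT
  have hTm : MeasurableSet T := hSm.compl
  have hPT : P T = 0 := hPSc
  have hQsTc : Qs Tᶜ = 0 := by rwa [hT, compl_compl]
  have hle : ∀ A, MeasurableSet A → transK Qa A ≤ Qa A := by
    intro A hA
    have hQaT : Qa (A ∩ T) = 0 := hQaP (measure_mono_null Set.inter_subset_right hPT)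
    have hKQaT : transK Qa (A ∩ T) = 0 := hKQaP (measure_mono_null Set.inter_subset_right hPT)
    have hQaA : Qa A = Qa (A \ T) := by
      rw [← measure_diff_add_inter A hTm, hQaT, add_zero]
    have hKQaA : transK Qa A = transK Qa (A \ T) := by
      rw [← measure_diff_add_inter A hTm, hKQaT, add_zero]
    have hQsd : Qs (A \ T) = 0 :=
      measure_mono_null (Set.diff_subset_compl A T) hQsTc
    have hQd : Q (A \ T) = Qa (A \ T) := by
      rw [← hdecomp]
      simp [Measure.add_apply, hQsd]
    have hKQd : transK Q (A \ T) = transK Qs (A \ T) + transK Qa (A \ T) := by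
      rw [← hdecomp, transK_add]
      simp [Measure.add_apply, add_comm]
    calc transK Qa A = transK Qa (A \ T) := hKQaA
      _ ≤ transK Q (A \ T) := by rw [hKQd]; exact le_add_self
      _ = Q (A \ T) := by rw [hK]
      _ = Qa (A \ T) := hQd
      _ = Qa A := hQaA.symm
  refine eq_of_le_of_univ_eq hle ?_
  rw [transK_univ]
-- chunk 7: almost-invariance of the zero set of the density
/-- two-sided almost invariance of a set under a shift. -/
def AInv {d : ℕ} (P : Measure (Env d)) (A : Set (Env d)) (v : Site d) : Prop :=
  P ((shift v ⁻¹' A) \ A) = 0 ∧ P (A \ (shift v ⁻¹' A)) = 0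

lemma shift_preimage_comp (v v' : Site d) (A : Set (Env d)) :
    shift (v + v') ⁻¹' A = shift v ⁻¹' (shift v' ⁻¹' A) := by
  ext ω
  simp only [Set.mem_preimage]
  rw [shift_shift]

lemma AInv.add {P : Measure (Env d)} [IsProbabilityMeasure P] (hIID : IsIID P)
    {A : Set (Env d)} (hAm : MeasurableSet A) {v v' : Site d}
    (h : AInv P A v) (h' : AInv P A v') : AInv P A (v + v') := by
  have hpre : ∀ (u : Site d) (B : Set (Env d)), MeasurableSet B →
      P (shift u ⁻¹' B) = P B := by
    intro u B hB
    rw [← Measure.map_apply (measurable_shift u) hB, shift_measurePreserving hIID u]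
  constructor
  · have hsub : (shift (v + v') ⁻¹' A) \ A ⊆
        (shift v ⁻¹' ((shift v' ⁻¹' A) \ A)) ∪ ((shift v ⁻¹' A) \ A) := by
      rw [shift_preimage_comp]
      intro ω ⟨h1, h2⟩
      by_cases hmid : ω ∈ shift v ⁻¹' A
      · exact Or.inr ⟨hmid, h2⟩
      · exact Or.inl ⟨h1, hmid⟩
    refine measure_mono_null hsub (measure_union_null ?_ h.1)
    rw [hpre v _ (((measurable_shift v') hAm).diff hAm)]
    exact h'.1
  · have hsub : A \ (shift (v + v') ⁻¹' A) ⊆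
        (shift v ⁻¹' (A \ (shift v' ⁻¹' A))) ∪ (A \ (shift v ⁻¹' A)) := by
      rw [shift_preimage_comp]
      intro ω ⟨h1, h2⟩
      by_cases hmid : ω ∈ shift v ⁻¹' A
      · exact Or.inl ⟨hmid, h2⟩
      · exact Or.inr ⟨h1, hmid⟩
    refine measure_mono_null hsub (measure_union_null ?_ h.2)
    rw [hpre v _ (hAm.diff ((measurable_shift v') hAm))]
    exact h'.2

lemma AInv.nsmul {P : Measure (Env d)} [IsProbabilityMeasure P] (hIID : IsIID P)
    {A : Set (Env d)} (hAm : MeasurableSet A) {v : Site d}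
    (h : AInv P A v) : ∀ n : ℕ, AInv P A (n • v) := by
  intro n
  induction n with
  | zero =>
      constructor <;>
        · simp only [zero_smul]
          have : shift (0 : Site d) ⁻¹' A = A := by
            ext ω; simp [Set.mem_preimage, shift_zero]
          simp [this]
  | succ n ih =>
      have : (n + 1) • v = n • v + v := succ_nsmul v n
      rw [this]
      exact AInv.add hIID hAm ih h

/-- the minus of a step is a step. -/
lemma stepVec_neg (s : StepIdx d) : stepVec (s.1, !s.2) = -stepVec s := by
  funext j
  simp only [stepVec, Pi.neg_apply]
  by_cases hj : j = s.1 <;> cases hs : s.2 <;> simp [hj, hs]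

/-- one-sided invariance of the zero set of the density, for each step. -/
lemma zeroSet_oneSided {P Q : Measure (Env d)} [IsProbabilityMeasure P]
    [IsProbabilityMeasure Q] (hUE : UniformlyElliptic P) (hIID : IsIID P)
    (hK : transK Q = Q) (s : StepIdx d) :
    P ((shift (stepVec s) ⁻¹' {ω | Q.rnDeriv P ω = 0}) \ {ω | Q.rnDeriv P ω = 0}) = 0 := by
  obtain ⟨η, hη, hηP⟩ := hUE
  set f := Q.rnDeriv P with hfdef
  have hf : Measurable f := Measure.measurable_rnDeriv Q P
  set A : Set (Env d) := {ω | f ω = 0} with hAdef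
  have hAm : MeasurableSet A := hf (measurableSet_singleton 0)
  set Qa := P.withDensity f with hQa
  have hQaP : Qa ≪ P := withDensity_absolutelyContinuous _ _
  have hKQa : transK Qa = Qa := transK_rnDeriv_invariant hIID hK
  -- Qa A = 0
  have hQaA : Qa A = 0 := by
    rw [hQa, withDensity_apply _ hAm]
    rw [setLIntegral_congr_fun hAm (fun ω hω => hω)]
    simp
  -- hence each term of transK Qa A vanishes
  have hterm : ∫⁻ ω in shift (stepVec s) ⁻¹' A, ((wgt s ω : ℝ≥0) : ℝ≥0∞) ∂Qa = 0 := by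
    have h0 : transK Qa A = 0 := by rw [hKQa]; exact hQaA
    rw [transK_apply Qa hAm] at h0
    exact (Finset.sum_eq_zero_iff.1 h0) s (Finset.mem_univ s)
  -- ellipticity: wgt ≥ ofReal η a.e.
  have haeP : ∀ᵐ ω ∂P, η ≤ (ω 0).1 s := by
    rw [ae_iff]
    have : {ω : Env d | ¬ η ≤ (ω 0).1 s} = {ω : Env d | (ω 0).1 s < η} := by
      ext ω; simp [not_le]
    rw [this]; exact hηP s
  have haeQa : ∀ᵐ ω ∂Qa, η ≤ (ω 0).1 s := hQaP.ae_le haeP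
  have hQapre : Qa (shift (stepVec s) ⁻¹' A) = 0 := by
    set pre := shift (stepVec s) ⁻¹' A with hpre
    have hpm : MeasurableSet pre := (measurable_shift _) hAm
    have hlow : ENNReal.ofReal η * Qa pre ≤
        ∫⁻ ω in pre, ((wgt s ω : ℝ≥0) : ℝ≥0∞) ∂Qa := by
      have hconst : ∫⁻ _ω in pre, ENNReal.ofReal η ∂Qa = ENNReal.ofReal η * Qa pre := by
        rw [setLIntegral_const]
      rw [← hconst]
      refine lintegral_mono_ae ?_
      refine ae_restrict_of_ae ?_
      filter_upwards [haeQa] with ω hω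
      have : ((wgt s ω : ℝ≥0) : ℝ≥0∞) = ENNReal.ofReal ((ω 0).1 s) := by
        rw [ENNReal.ofReal]; rfl
      rw [this]
      exact ENNReal.ofReal_le_ofReal hω
    rw [hterm] at hlow
    have hη0 : ENNReal.ofReal η ≠ 0 := (ENNReal.ofReal_pos.2 hη).ne'
    exact (mul_eq_zero.1 (le_antisymm hlow zero_le)).resolve_left hη0
  -- convert to a statement about P
  set pre := shift (stepVec s) ⁻¹' A with hpre
  have hpm : MeasurableSet pre := (measurable_shift _) hAm
  have hz : ∫⁻ ω in pre, f ω ∂P = 0 := by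
    rw [← withDensity_apply _ hpm]; exact hQapre
  have hae0 : ∀ᵐ ω ∂P.restrict pre, f ω = 0 := by
    have h00 := (lintegral_eq_zero_iff hf).1 hz
    filter_upwards [h00] with ω hω using hω
  have hae1 : ∀ᵐ ω ∂P, ω ∈ pre → f ω = 0 := (ae_restrict_iff' hpm).1 hae0
  rw [ae_iff] at hae1
  have : {ω : Env d | ¬ (ω ∈ pre → f ω = 0)} = pre \ A := by
    ext ω
    simp only [Set.mem_setOf_eq, Set.mem_diff, Classical.not_imp]
    exact Iff.rfl
  rwa [this] at hae1

/-- two-sided almost invariance of the zero set, for each step. -/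
lemma zeroSet_aInv {P Q : Measure (Env d)} [IsProbabilityMeasure P]
    [IsProbabilityMeasure Q] (hUE : UniformlyElliptic P) (hIID : IsIID P)
    (hK : transK Q = Q) (s : StepIdx d) :
    AInv P {ω | Q.rnDeriv P ω = 0} (stepVec s) := by
  set A : Set (Env d) := {ω | Q.rnDeriv P ω = 0} with hAdef
  have hAm : MeasurableSet A :=
    (Measure.measurable_rnDeriv Q P) (measurableSet_singleton 0)
  refine ⟨zeroSet_oneSided hUE hIID hK s, ?_⟩
  have hneg := zeroSet_oneSided hUE hIID hK (s.1, !s.2)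
  rw [stepVec_neg] at hneg
  -- transport by the measure preserving shift by `stepVec s`
  have hmp : ∀ B : Set (Env d), MeasurableSet B → P (shift (stepVec s) ⁻¹' B) = P B := by
    intro B hB
    rw [← Measure.map_apply (measurable_shift _) hB, shift_measurePreserving hIID]
  have hkey : shift (stepVec s) ⁻¹' ((shift (-stepVec s) ⁻¹' A) \ A) =
      A \ (shift (stepVec s) ⁻¹' A) := by
    ext ω
    simp only [Set.mem_preimage, Set.mem_diff]
    constructor
    · rintro ⟨h1, h2⟩
      refine ⟨?_, h2⟩
      have : shift (-stepVec s) (shift (stepVec s) ω) = ω := by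
        rw [shift_shift]
        simp [shift_zero]
      rwa [this] at h1
    · rintro ⟨h1, h2⟩
      refine ⟨?_, h2⟩
      have : shift (-stepVec s) (shift (stepVec s) ω) = ω := by
        rw [shift_shift]
        simp [shift_zero]
      rwa [this]
  have := hmp _ (((measurable_shift (-stepVec s)) hAm).diff hAm)
  rw [hkey] at this
  rw [this]
  exact hneg
-- chunk 8: a zero-one law from mixing
lemma symmDiff_inter_subset {α : Type*} (A B C D : Set α) :
    (A ∩ C) ∆ (B ∩ D) ⊆ (A ∆ B) ∪ (C ∆ D) := by
  intro x hx
  rcases hx with ⟨⟨hA, hC⟩, hn⟩ | ⟨⟨hB, hD⟩, hn⟩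
  · by_cases hB : x ∈ B
    · have hD : x ∉ D := fun hD => hn ⟨hB, hD⟩
      exact Or.inr (Or.inl ⟨hC, hD⟩)
    · exact Or.inl (Or.inl ⟨hA, hB⟩)
  · by_cases hA : x ∈ A
    · have hC : x ∉ C := fun hC => hn ⟨hA, hC⟩
      exact Or.inr (Or.inr ⟨hD, hC⟩)
    · exact Or.inl (Or.inr ⟨hB, hA⟩)

lemma toReal_measure_diff_le {α : Type*} [MeasurableSpace α] {μ : Measure α}
    [IsFiniteMeasure μ] (X Y : Set α) :
    |(μ X).toReal - (μ Y).toReal| ≤ (μ (X ∆ Y)).toReal := by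
  have hXY : X ⊆ Y ∪ (X ∆ Y) := by
    intro x hx
    by_cases hy : x ∈ Y
    · exact Or.inl hy
    · exact Or.inr (Or.inl ⟨hx, hy⟩)
  have hYX : Y ⊆ X ∪ (X ∆ Y) := by
    intro x hx
    by_cases hy : x ∈ X
    · exact Or.inl hy
    · exact Or.inr (Or.inr ⟨hx, hy⟩)
  have h1 : μ X ≤ μ Y + μ (X ∆ Y) := le_trans (measure_mono hXY) (measure_union_le _ _)
  have h2 : μ Y ≤ μ X + μ (X ∆ Y) := le_trans (measure_mono hYX) (measure_union_le _ _)
  have h1' : (μ X).toReal ≤ (μ Y).toReal + (μ (X ∆ Y)).toReal := by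
    rw [← ENNReal.toReal_add (measure_ne_top _ _) (measure_ne_top _ _)]
    exact ENNReal.toReal_mono (by finiteness) h1
  have h2' : (μ Y).toReal ≤ (μ X).toReal + (μ (X ∆ Y)).toReal := by
    rw [← ENNReal.toReal_add (measure_ne_top _ _) (measure_ne_top _ _)]
    exact ENNReal.toReal_mono (by finiteness) h2
  rw [abs_sub_le_iff]
  constructor <;> linarith

lemma shift_preimage_genCyl (z : Site d) (F : Finset (Site d)) {B : Set (Env d)}
    (h : MeasurableSet[MeasurableSpace.generateFrom (cylSet F)] B) :
    MeasurableSet[MeasurableSpace.generateFrom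
      (cylSet (F.image (fun x => z + x)))] (shift z ⁻¹' B) := by
  have hm : @Measurable (Env d) (Env d)
      (MeasurableSpace.generateFrom (cylSet (F.image (fun x => z + x))))
      (MeasurableSpace.generateFrom (cylSet F)) (shift z) := by
    refine @measurable_generateFrom (Env d) (Env d)
      (MeasurableSpace.generateFrom (cylSet (F.image (fun x => z + x))))
      (cylSet F) (shift z) ?_
    rintro t ⟨B0, hB0, rfl⟩
    rw [shift_preimage_cyl]
    exact MeasurableSpace.measurableSet_generateFrom ⟨fun y => B0 (y - z),
      fun y => hB0 (y - z), rfl⟩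
  exact hm h

lemma zero_one_of_aInv {P : Measure (Env d)} [IsProbabilityMeasure P]
    (hd : 1 ≤ d) (hIID : IsIID P) {A : Set (Env d)} (hAm : MeasurableSet A)
    (hInv : ∀ n : ℕ, AInv P A (n • stepVec (⟨0, hd⟩, true))) :
    P A = 0 ∨ P A = 1 := by
  classical
  set i0 : Fin d := ⟨0, hd⟩ with hi0
  set v1 : Site d := stepVec (i0, true) with hv1
  set a : ℝ := (P A).toReal with ha
  have ha01 : 0 ≤ a ∧ a ≤ 1 := by
    constructor
    · exact ENNReal.toReal_nonneg
    · rw [ha]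
      have : P A ≤ 1 := prob_le_one
      calc (P A).toReal ≤ (1:ℝ≥0∞).toReal := ENNReal.toReal_mono (by simp) this
        _ = 1 := by simp
  have hkey : ∀ ε : ℝ, 0 < ε → |a - a^2| ≤ 4 * ε := by
    intro ε hε
    obtain ⟨F, B, hBm, hBa⟩ := approx_by_cyl P hAm
      (ε := ENNReal.ofReal ε) (ENNReal.ofReal_pos.2 hε) ENNReal.ofReal_lt_top
    have hBms : MeasurableSet B := cylAlg_le F _ hBm
    -- choose a large shift
    set M : ℕ := F.sup (fun x => (x i0).natAbs) with hM
    set n : ℕ := 1 + 2 * M with hn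
    set z : Site d := n • v1 with hz
    have hzi0 : z i0 = (n : ℤ) := by
      rw [hz]
      have : v1 i0 = 1 := by simp [hv1, stepVec]
      simp [this]
    have hdisj : Disjoint F (F.image (fun x => z + x)) := by
      rw [Finset.disjoint_left]
      rintro y hy hyim
      obtain ⟨x, hx, hxy⟩ := Finset.mem_image.1 hyim
      have h1 : (y i0).natAbs ≤ M := Finset.le_sup (f := fun x => (x i0).natAbs) hy
      have h2 : (x i0).natAbs ≤ M := Finset.le_sup (f := fun x => (x i0).natAbs) hx
      have h3 := congrFun hxy i0
      have h4 : z i0 + x i0 = y i0 := h3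
      rw [hzi0] at h4
      have h5 : (n : ℤ) = 1 + 2 * (M : ℤ) := by rw [hn]; push_cast; ring
      have h6 : ((y i0).natAbs : ℤ) ≤ (M : ℤ) := by exact_mod_cast h1
      have h7 : ((x i0).natAbs : ℤ) ≤ (M : ℤ) := by exact_mod_cast h2
      set Y : ℤ := y i0 with hY
      set X : ℤ := x i0 with hX
      clear_value Y X
      clear_value z
      clear_value n
      clear_value M
      clear * - h4 h5 h6 h7
      omega
    set B' : Set (Env d) := shift z ⁻¹' B with hB'
    have hB'm := shift_preimage_genCyl z F hBm
    have hprod : P (B ∩ B') = P B * P B' :=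
      indep_of_disjoint hIID hdisj hBm hB'm
    have hmp : ∀ C : Set (Env d), MeasurableSet C → P (shift z ⁻¹' C) = P C := by
      intro C hC
      rw [← Measure.map_apply (measurable_shift _) hC, shift_measurePreserving hIID]
    have hPB' : P B' = P B := hmp B hBms
    -- A is almost invariant under the shift by z
    have hAInv : AInv P A z := hInv n
    have hAsd : P (A ∆ (shift z ⁻¹' A)) = 0 := by
      rw [Set.symmDiff_def]
      refine measure_union_null hAInv.2 hAInv.1
    have hAA : P (A ∩ shift z ⁻¹' A) = P A := by
      have hsplit : P (A \ shift z ⁻¹' A) + P (A ∩ shift z ⁻¹' A) = P A :=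
        measure_diff_add_inter A ((measurable_shift z) hAm)
      rw [hAInv.2, zero_add] at hsplit
      exact hsplit
    -- numeric estimates
    set b : ℝ := (P B).toReal with hb
    have hεa : (P (A ∆ B)).toReal ≤ ε := by
      calc (P (A ∆ B)).toReal ≤ (ENNReal.ofReal ε).toReal :=
            ENNReal.toReal_mono (by simp) hBa
        _ = ε := ENNReal.toReal_ofReal hε.le
    have hab : |a - b| ≤ ε := le_trans (toReal_measure_diff_le A B) hεa
    have hb01 : 0 ≤ b ∧ b ≤ 1 := by
      constructor
      · exact ENNReal.toReal_nonneg
      · calc (P B).toReal ≤ (1:ℝ≥0∞).toReal := ENNReal.toReal_mono (by simp) prob_le_one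
          _ = 1 := by simp
    have hstep1 : |a - b * b| ≤ 2 * ε := by
      have e1 : (P (A ∩ shift z ⁻¹' A)).toReal = a := by rw [hAA]
      have e2 : (P (B ∩ B')).toReal = b * b := by
        rw [hprod, hPB', ENNReal.toReal_mul]
      have e3 : |(P (A ∩ shift z ⁻¹' A)).toReal - (P (B ∩ B')).toReal| ≤
          (P ((A ∩ shift z ⁻¹' A) ∆ (B ∩ B'))).toReal :=
        toReal_measure_diff_le _ _
      have e4 : P ((A ∩ shift z ⁻¹' A) ∆ (B ∩ B')) ≤
          P (A ∆ B) + P ((shift z ⁻¹' A) ∆ B') :=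
        le_trans (measure_mono (symmDiff_inter_subset _ _ _ _)) (measure_union_le _ _)
      have e5 : P ((shift z ⁻¹' A) ∆ B') = P (A ∆ B) := by
        have : (shift z ⁻¹' A) ∆ B' = shift z ⁻¹' (A ∆ B) := by
          rw [hB']
          simp [Set.symmDiff_def, Set.preimage_union, Set.preimage_diff]
        rw [this]
        exact hmp _ (hAm.symmDiff hBms)
      have e6 : (P ((A ∩ shift z ⁻¹' A) ∆ (B ∩ B'))).toReal ≤ 2 * ε := by
        calc (P ((A ∩ shift z ⁻¹' A) ∆ (B ∩ B'))).toReal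
            ≤ (P (A ∆ B) + P ((shift z ⁻¹' A) ∆ B')).toReal :=
              ENNReal.toReal_mono (by finiteness) e4
          _ = (P (A ∆ B)).toReal + (P ((shift z ⁻¹' A) ∆ B')).toReal :=
              ENNReal.toReal_add (measure_ne_top _ _) (measure_ne_top _ _)
          _ = (P (A ∆ B)).toReal + (P (A ∆ B)).toReal := by rw [e5]
          _ ≤ ε + ε := add_le_add hεa hεa
          _ = 2 * ε := by ring
      rw [e1, e2] at e3
      exact le_trans e3 e6
    have hsq : |b * b - a^2| ≤ 2 * ε := by
      have : |b * b - a^2| = |b - a| * |b + a| := by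
        rw [← abs_mul]; ring_nf
      rw [this]
      have h1 : |b - a| ≤ ε := by rwa [abs_sub_comm] at hab
      have h2 : |b + a| ≤ 2 := by
        rw [abs_of_nonneg (by linarith [ha01.1, hb01.1])]
        linarith [ha01.2, hb01.2]
      calc |b - a| * |b + a| ≤ ε * 2 :=
            mul_le_mul h1 h2 (abs_nonneg _) hε.le
        _ = 2 * ε := by ring
    calc |a - a^2| ≤ |a - b * b| + |b * b - a^2| := abs_sub_le _ _ _
      _ ≤ 2 * ε + 2 * ε := add_le_add hstep1 hsq
      _ = 4 * ε := by ring
  have haa : a = a^2 := by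
    by_contra hne
    have habs : 0 < |a - a^2| := abs_pos.2 (sub_ne_zero.2 hne)
    have := hkey (|a - a^2| / 8) (by linarith)
    linarith
  have : a * (1 - a) = 0 := by nlinarith
  rcases mul_eq_zero.1 this with h0 | h1
  · left
    exact ((ENNReal.toReal_eq_zero_iff _).1 h0).resolve_right (measure_ne_top _ _)
  · right
    have ha1 : a = 1 := by linarith
    have : (P A).toReal = (1:ℝ≥0∞).toReal := by rw [← ha, ha1]; simp
    exact (ENNReal.toReal_eq_toReal_iff' (measure_ne_top _ _) (by simp)).1 this
/-- If an invariant measure not mutually singular with `P` exists,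
then an invariant measure equivalent to `P` exists. -/
theorem statement2 (d : ℕ) (hd : 1 ≤ d)
    (P : Measure (Env d)) [IsProbabilityMeasure P]
    (hUE : UniformlyElliptic P) (hIID : IsIID P)
    (Q : Measure (Env d)) (hQ : IsProbabilityMeasure Q) (hQinv : InvariantPOV Q)
    (hNS : ¬ Measure.MutuallySingular Q P) :
    ∃ Q' : Measure (Env d),
      IsProbabilityMeasure Q' ∧ InvariantPOV Q' ∧ Q' ≪ P ∧ P ≪ Q' := by
  haveI := hQ
  have hK : transK Q = Q := transK_eq_of_invariantPOV hQinv
  set f := Q.rnDeriv P with hfdef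
  have hf : Measurable f := Measure.measurable_rnDeriv Q P
  set Qa := P.withDensity f with hQadef
  have hQaP : Qa ≪ P := withDensity_absolutelyContinuous _ _
  have hKQa : transK Qa = Qa := transK_rnDeriv_invariant hIID hK
  have hdecomp : Q.singularPart P + Qa = Q := Measure.singularPart_add_rnDeriv Q P
  set A : Set (Env d) := {ω | f ω = 0} with hAdef
  have hAm : MeasurableSet A := hf (measurableSet_singleton 0)
  -- the zero set of the density has measure zero
  have hQa_ne : Qa ≠ 0 := by
    intro h0
    refine hNS ?_
    have heq : Q = Q.singularPart P := by
      conv_lhs => rw [← hdecomp]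
      rw [h0, add_zero]
    have hsing := Measure.mutuallySingular_singularPart Q P
    rw [← heq] at hsing
    exact hsing
  have hPA : P A = 0 := by
    have hInvn : ∀ n : ℕ, AInv P A (n • stepVec (⟨0, hd⟩, true)) :=
      AInv.nsmul hIID hAm (zeroSet_aInv hUE hIID hK (⟨0, hd⟩, true))
    rcases zero_one_of_aInv hd hIID hAm hInvn with h0 | h1
    · exact h0
    · exfalso
      have hcompl : P Aᶜ = 0 := by
        rw [measure_compl hAm (measure_ne_top _ _), h1, measure_univ, tsub_self]
      have hae : f =ᵐ[P] 0 := by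
        rw [Filter.EventuallyEq, ae_iff]
        have : {ω : Env d | ¬ f ω = (0 : Env d → ℝ≥0∞) ω} = Aᶜ := by
          ext ω; simp [hAdef]
        rw [this]
        exact hcompl
      have : Qa = 0 := by
        rw [hQadef, withDensity_congr_ae hae, withDensity_zero]
      exact hQa_ne this
  -- normalise the absolutely continuous part
  set c := Qa Set.univ with hc
  have hc0 : c ≠ 0 := by
    intro h0
    exact hQa_ne (Measure.measure_univ_eq_zero.1 h0)
  have hcT : c ≠ ⊤ := by
    have hle1 : Qa Set.univ ≤ Q Set.univ := by
      rw [← hdecomp]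
      simp [Measure.add_apply]
    have hQ1 : Q Set.univ = 1 := measure_univ
    exact (lt_of_le_of_lt (le_trans hle1 (le_of_eq hQ1)) ENNReal.one_lt_top).ne
  refine ⟨c⁻¹ • Qa, ?_, ?_, ?_, ?_⟩
  · refine ⟨?_⟩
    rw [Measure.smul_apply, smul_eq_mul, ← hc, ENNReal.inv_mul_cancel hc0 hcT]
  · have hfin : IsFiniteMeasure (c⁻¹ • Qa) := by
      refine ⟨?_⟩
      rw [Measure.smul_apply, smul_eq_mul, ← hc, ENNReal.inv_mul_cancel hc0 hcT]
      norm_num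
    exact invariantPOV_of_transK (by rw [transK_smul, hKQa])
  · refine Measure.AbsolutelyContinuous.mk fun B hB hPB => ?_
    rw [Measure.smul_apply, hQaP hPB, smul_zero]
  · refine Measure.AbsolutelyContinuous.mk fun B hB hQ'B => ?_
    have hQaB : Qa B = 0 := by
      rw [Measure.smul_apply, smul_eq_mul] at hQ'B
      rcases mul_eq_zero.1 hQ'B with h | h
      · exact absurd h (ENNReal.inv_ne_zero.2 hcT)
      · exact h
    have hz : ∫⁻ ω in B, f ω ∂P = 0 := by
      rw [← withDensity_apply _ hB]; exact hQaB
    have hae0 : ∀ᵐ ω ∂P.restrict B, f ω = 0 := by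
      have h00 := (lintegral_eq_zero_iff hf).1 hz
      filter_upwards [h00] with ω hω using hω
    have hae1 : ∀ᵐ ω ∂P, ω ∈ B → f ω = 0 := (ae_restrict_iff' hB).1 hae0
    rw [ae_iff] at hae1
    have hBA : {ω : Env d | ¬ (ω ∈ B → f ω = 0)} = B \ A := by
      ext ω
      simp only [Set.mem_setOf_eq, Set.mem_diff, Classical.not_imp]
      exact Iff.rfl
    rw [hBA] at hae1
    have hPB0 : P B ≤ 0 :=
      calc P B ≤ P (B \ A) + P (B ∩ A) := by
            rw [← measure_diff_add_inter B hAm]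
        _ ≤ 0 + P A := add_le_add (le_of_eq hae1) (measure_mono Set.inter_subset_right)
        _ = 0 := by rw [hPA, zero_add]
    exact le_antisymm hPB0 zero_le
end RWRE
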